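/- Let p be a prime and let A be an element of GL_p(𝔽_p) (Matrix.GeneralLinearGroup (Fin p) (ZMod p)) whose order is a power of p, i.e., orderOf A = p^k for some natural number k. Then A^p = 1. -/

import Mathlib

open Polynomial in
lemma matrix_nilpotent_pow_card_eq_zero {n : Type*} [Fintype n] [DecidableEq n]
    {K : Type*} [Field K] (M : Matrix n n K) (h : IsNilpotent M) :
    M ^ Fintype.card n = 0 := by
  have h1 : IsNilpotent (M.charpoly - X ^ (Fintype.card n)) :=
    Matrix.isNilpotent_charpoly_sub_pow_of_isNilpotent h
  have h2 : M.charpoly = X ^ (Fintype.card n) := by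
    rw [← sub_eq_zero]; exact h1.eq_zero
  have := M.aeval_self_charpoly
  rwa [h2, map_pow, aeval_X] at this

/-- An element of `GL_p(𝔽_p)` of `p`-power order satisfies `A ^ p = 1`. -/
theorem pow_p_eq_one_of_orderOf_pPow
    {p : ℕ} (hp : p.Prime)
    (A : Matrix.GeneralLinearGroup (Fin p) (ZMod p))
    (k : ℕ) (hA : orderOf A = p ^ k) :
    A ^ p = 1 := by
  haveI : Fact p.Prime := ⟨hp⟩
  set M : Matrix (Fin p) (Fin p) (ZMod p) := (A : Matrix (Fin p) (Fin p) (ZMod p)) with hM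
  have hpow : M ^ (p ^ k) = 1 := by
    have : A ^ (p ^ k) = 1 := by rw [← hA]; exact pow_orderOf_eq_one A
    have := congrArg (Units.val) this
    push_cast at this
    simpa [hM] using this
  have hcomm : Commute (M - 1) (1 : Matrix (Fin p) (Fin p) (ZMod p)) := Commute.one_right _
  have hnil : (M - 1) ^ (p ^ k) = 0 := by
    have := add_pow_char_pow_of_commute p k hcomm
    rw [sub_add_cancel, hpow, one_pow] at this
    exact right_eq_add.mp this
  have hp2 : (M - 1) ^ p = 0 := by
    have := matrix_nilpotent_pow_card_eq_zero (M - 1) ⟨p ^ k, hnil⟩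
    simpa using this
  have : M ^ p = 1 := by
    have := add_pow_char_of_commute p hcomm
    rw [sub_add_cancel, hp2, one_pow, zero_add] at this
    exact this
  ext i j
  have := congrArg (fun m => m i j) this
  push_cast
  simpa [hM] using this
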